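/- In the symmetric SPRD algorithm (p = 1/2) with degree distribution F, the maximal edge length N at the origin is finite almost surely: P(N < ∞) = 1. -/

import Mathlib

set_option linter.unusedSectionVars false
set_option maxHeartbeats 1000000

open MeasureTheory ProbabilityTheory Filter
open scoped ENNReal

section SPRDAux
variable {Ω : Type*} [MeasureSpace Ω] [IsProbabilityMeasure (ℙ : Measure Ω)]

lemma atom_meas (Z : ℕ → Ω → ℤ)
    (hind : iIndepFun Z ℙ)
    (ν : ℤ → ℝ≥0∞) (hν : ∀ i v, ℙ {ω | Z i ω = v} = ν v)
    (m : ℕ) (v : Fin m → ℤ) :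
    ℙ {ω | (fun i : Fin m => Z (i : ℕ) ω) = v} = ∏ i : Fin m, ν (v i) := by
  classical
  set sets : ℕ → Set ℤ := fun j => if h : j < m then {v ⟨j, h⟩} else Set.univ with hsets
  have h1 : {ω | (fun i : Fin m => Z (i : ℕ) ω) = v}
      = ⋂ j ∈ Finset.range m, Z j ⁻¹' sets j := by
    ext ω
    simp only [Set.mem_setOf_eq, funext_iff, Set.mem_iInter, Finset.mem_range, Set.mem_preimage,
      hsets]
    constructor
    · intro h j hj
      rw [dif_pos hj]
      exact h ⟨j, hj⟩
    · intro h i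
      have := h i i.isLt
      rwa [dif_pos i.isLt, Set.mem_singleton_iff] at this
  rw [h1, hind.meas_biInter (fun j _ => ⟨sets j, MeasurableSpace.measurableSet_top, rfl⟩)]
  have h2 : ∀ j ∈ Finset.range m,
      ℙ (Z j ⁻¹' sets j) = (fun j => if h : j < m then ν (v ⟨j, h⟩) else 1) j := by
    intro j hj
    rw [Finset.mem_range] at hj
    simp only [hsets, dif_pos hj]
    rw [← hν j (v ⟨j, hj⟩)]
    congr 1
  rw [Finset.prod_congr rfl h2,
    ← Fin.prod_univ_eq_prod_range (fun j => if h : j < m then ν (v ⟨j, h⟩) else 1) m]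
  exact Finset.prod_congr rfl fun i _ => by rw [dif_pos i.isLt]

lemma cyl_meas (Z : ℕ → Ω → ℤ) (hmZ : ∀ i, Measurable (Z i))
    (hind : iIndepFun Z ℙ)
    (ν : ℤ → ℝ≥0∞) (hν : ∀ i v, ℙ {ω | Z i ω = v} = ν v)
    (m : ℕ) (B : Set (Fin m → ℤ)) :
    ℙ {ω | (fun i : Fin m => Z (i : ℕ) ω) ∈ B} = ∑' v : B, ∏ i : Fin m, ν (v.1 i) := by
  have h1 : {ω | (fun i : Fin m => Z (i : ℕ) ω) ∈ B}
      = ⋃ v : B, {ω | (fun i : Fin m => Z (i : ℕ) ω) = (v : Fin m → ℤ)} := by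
    ext ω
    simp only [Set.mem_setOf_eq, Set.mem_iUnion]
    exact ⟨fun h => ⟨⟨_, h⟩, rfl⟩, fun ⟨v, hv⟩ => hv ▸ v.2⟩
  rw [h1, measure_iUnion ?_ ?_]
  · exact tsum_congr fun v => atom_meas Z hind ν hν m v
  · intro v w hvw
    simp only [Function.onFun]
    rw [Set.disjoint_left]
    intro ω h1 h2
    exact hvw (Subtype.ext ((h1 : _ = _).symm.trans h2))
  · intro v
    have : {ω | (fun i : Fin m => Z (i : ℕ) ω) = (v : Fin m → ℤ)}
        = ⋂ i : Fin m, Z (i : ℕ) ⁻¹' {(v : Fin m → ℤ) i} := by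
      ext ω; simp [funext_iff]
    rw [this]
    exact MeasurableSet.iInter fun i => (hmZ i) MeasurableSpace.measurableSet_top

lemma cyl_symm (Z : ℕ → Ω → ℤ) (hmZ : ∀ i, Measurable (Z i))
    (hind : iIndepFun Z ℙ)
    (ν : ℤ → ℝ≥0∞) (hν : ∀ i v, ℙ {ω | Z i ω = v} = ν v)
    (hsym : ∀ v, ν (-v) = ν v)
    (m : ℕ) (B : Set (Fin m → ℤ)) :
    ℙ {ω | (fun i : Fin m => Z (i : ℕ) ω) ∈ (fun v : Fin m → ℤ => -v) ⁻¹' B}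
      = ℙ {ω | (fun i : Fin m => Z (i : ℕ) ω) ∈ B} := by
  rw [cyl_meas Z hmZ hind ν hν m _, cyl_meas Z hmZ hind ν hν m B]
  let e : ((fun v : Fin m → ℤ => -v) ⁻¹' B) ≃ B :=
    (Equiv.neg (Fin m → ℤ)).subtypeEquiv (fun v => Iff.rfl)
  rw [← Equiv.tsum_eq e (fun v : B => ∏ i : Fin m, ν (v.1 i))]
  refine tsum_congr fun v => Finset.prod_congr rfl fun i _ => ?_
  have : (e v).1 i = -(v.1 i) := rfl
  rw [this, hsym]


lemma core_walk (Z : ℕ → Ω → ℤ) (hmZ : ∀ i, Measurable (Z i))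
    (hind : iIndepFun Z ℙ)
    (ν : ℤ → ℝ≥0∞) (hν : ∀ i v, ℙ {ω | Z i ω = v} = ν v)
    (hsym : ∀ v, ν (-v) = ν v)
    (a : ℕ) (ha : 1 ≤ a) (hpos : ν (a : ℤ) ≠ 0) :
    ∀ᵐ ω ∂ℙ, ∀ k : ℕ, ∃ n : ℕ, (k : ℤ) ≤ ∑ i ∈ Finset.range n, Z i ω := by
  classical
  set T : ℕ → Ω → ℤ := fun n ω => ∑ i ∈ Finset.range n, Z i ω with hT
  have hTmeas : ∀ n, Measurable (T n) := fun n =>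
    Finset.measurable_sum _ (fun i _ => hmZ i)
  set U : ℕ → Set Ω := fun k => {ω | ∃ n, (k : ℤ) ≤ T n ω} with hU
  set D : ℕ → Set Ω := fun k => {ω | ∃ n, T n ω ≤ -(k : ℤ)} with hD
  set A : Set Ω := ⋂ k, U k with hA
  set A' : Set Ω := ⋂ k, D k with hA'
  have hUmeas : ∀ k, MeasurableSet (U k) := by
    intro k
    have : U k = ⋃ n, T n ⁻¹' {x | (k : ℤ) ≤ x} := by ext ω; simp [hU, Set.preimage]
    rw [this]
    exact MeasurableSet.iUnion fun n => (hTmeas n) MeasurableSpace.measurableSet_top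
  have hDmeas : ∀ k, MeasurableSet (D k) := by
    intro k
    have : D k = ⋃ n, T n ⁻¹' {x | x ≤ -(k : ℤ)} := by ext ω; simp [hD, Set.preimage]
    rw [this]
    exact MeasurableSet.iUnion fun n => (hTmeas n) MeasurableSpace.measurableSet_top
  -- finite-horizon symmetry
  have hfin : ∀ (k : ℤ) (m : ℕ),
      ℙ {ω | ∃ n, n ≤ m ∧ k ≤ T n ω} = ℙ {ω | ∃ n, n ≤ m ∧ T n ω ≤ -k} := by
    intro k m
    set B : Set (Fin m → ℤ) :=
      {v | ∃ n, n ≤ m ∧ k ≤ ∑ i : Fin m, if (i : ℕ) < n then v i else 0} with hB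
    have hsum : ∀ (w : ℕ → ℤ) (n : ℕ), n ≤ m →
        (∑ i : Fin m, if (i : ℕ) < n then w i else 0) = ∑ i ∈ Finset.range n, w i := by
      intro w n hn
      rw [Fin.sum_univ_eq_sum_range (fun j => if j < n then w j else 0) m, ← Finset.sum_filter]
      congr 1
      ext j
      simp only [Finset.mem_filter, Finset.mem_range]
      omega
    have h1 : {ω | ∃ n, n ≤ m ∧ k ≤ T n ω}
        = {ω | (fun i : Fin m => Z (i : ℕ) ω) ∈ B} := by
      ext ω
      simp only [Set.mem_setOf_eq, hB, hT]
      constructor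
      · rintro ⟨n, hn, hk⟩
        exact ⟨n, hn, by rw [hsum (fun j => Z j ω) n hn]; exact hk⟩
      · rintro ⟨n, hn, hk⟩
        rw [hsum (fun j => Z j ω) n hn] at hk
        exact ⟨n, hn, hk⟩
    have h2 : {ω | ∃ n, n ≤ m ∧ T n ω ≤ -k}
        = {ω | (fun i : Fin m => Z (i : ℕ) ω) ∈ (fun v : Fin m → ℤ => -v) ⁻¹' B} := by
      ext ω
      simp only [Set.mem_setOf_eq, Set.mem_preimage, hB, hT]
      have hneg : ∀ n : ℕ,
          (∑ i : Fin m, if (i : ℕ) < n then (-(fun i : Fin m => Z (i : ℕ) ω)) i else 0)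
            = -(∑ i : Fin m, if (i : ℕ) < n then Z (i : ℕ) ω else 0) := by
        intro n
        rw [← Finset.sum_neg_distrib]
        refine Finset.sum_congr rfl fun i _ => ?_
        by_cases h : (i : ℕ) < n <;> simp [h]
      constructor
      · rintro ⟨n, hn, hk⟩
        refine ⟨n, hn, ?_⟩
        rw [hneg n, hsum (fun j => Z j ω) n hn]
        omega
      · rintro ⟨n, hn, hk⟩
        rw [hneg n, hsum (fun j => Z j ω) n hn] at hk
        exact ⟨n, hn, by omega⟩
    rw [h1, h2, cyl_symm Z hmZ hind ν hν hsym m B]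
  -- infinite-horizon symmetry
  have hUanti : ∀ j j' : ℕ, j ≤ j' → U j' ⊆ U j := by
    intro j j' hj ω
    rintro ⟨n, hn⟩
    exact ⟨n, le_trans (by exact_mod_cast hj) hn⟩
  have hDanti : ∀ j j' : ℕ, j ≤ j' → D j' ⊆ D j := by
    intro j j' hj ω
    rintro ⟨n, hn⟩
    refine ⟨n, le_trans hn ?_⟩
    omega
  have hUD : ∀ k : ℕ, ℙ (U k) = ℙ (D k) := by
    intro k
    have hUu : U k = ⋃ m, {ω | ∃ n, n ≤ m ∧ ((k : ℕ) : ℤ) ≤ T n ω} := by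
      ext ω
      simp only [hU, Set.mem_setOf_eq, Set.mem_iUnion]
      exact ⟨fun ⟨n, hn⟩ => ⟨n, n, le_refl n, hn⟩, fun ⟨m, n, _, hn⟩ => ⟨n, hn⟩⟩
    have hDu : D k = ⋃ m, {ω | ∃ n, n ≤ m ∧ T n ω ≤ -((k : ℕ) : ℤ)} := by
      ext ω
      simp only [hD, Set.mem_setOf_eq, Set.mem_iUnion]
      exact ⟨fun ⟨n, hn⟩ => ⟨n, n, le_refl n, hn⟩, fun ⟨m, n, _, hn⟩ => ⟨n, hn⟩⟩
    rw [hUu, hDu, Directed.measure_iUnion ?_, Directed.measure_iUnion ?_]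
    · exact iSup_congr fun m => hfin ((k : ℕ) : ℤ) m
    · intro m m'
      refine ⟨max m m', ?_, ?_⟩ <;>
        · rintro ω ⟨n, hn, h⟩
          exact ⟨n, by omega, h⟩
    · intro m m'
      refine ⟨max m m', ?_, ?_⟩ <;>
        · rintro ω ⟨n, hn, h⟩
          exact ⟨n, by omega, h⟩
  have hAA' : ℙ A = ℙ A' := by
    rw [hA, hA',
      Directed.measure_iInter (fun k => (hUmeas k).nullMeasurableSet)
        (fun j k => ⟨max j k, hUanti _ _ (le_max_left _ _), hUanti _ _ (le_max_right _ _)⟩)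
        ⟨0, measure_ne_top _ _⟩,
      Directed.measure_iInter (fun k => (hDmeas k).nullMeasurableSet)
        (fun j k => ⟨max j k, hDanti _ _ (le_max_left _ _), hDanti _ _ (le_max_right _ _)⟩)
        ⟨0, measure_ne_top _ _⟩]
    exact iInf_congr hUD
  -- Kolmogorov 0-1
  have h01 : ℙ A = 0 ∨ ℙ A = 1 := by
    refine measure_zero_or_one_of_measurableSet_limsup_atTop
      (s := fun i => MeasurableSpace.comap (Z i) inferInstance)
      (fun n => measurable_iff_comap_le.1 (hmZ n)) hind.iIndep ?_
    rw [limsup_eq_iInf_iSup_of_nat, MeasurableSpace.measurableSet_iInf]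
    intro N
    set mN := (⨆ i, ⨆ (_ : i ≥ N), MeasurableSpace.comap (Z i) (inferInstance : MeasurableSpace ℤ))
      with hmN
    have hZN : ∀ i, N ≤ i → Measurable[mN] (Z i) := by
      intro i hi
      rw [measurable_iff_comap_le]
      exact le_iSup₂ (f := fun i (_ : i ≥ N) =>
        MeasurableSpace.comap (Z i) (inferInstance : MeasurableSpace ℤ)) i hi
    have habs : ∀ (ω : Ω) (n : ℕ), n ≤ N →
        |∑ i ∈ Finset.range n, Z i ω| ≤ ∑ i ∈ Finset.range N, |Z i ω| := by
      intro ω n hn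
      calc |∑ i ∈ Finset.range n, Z i ω| ≤ ∑ i ∈ Finset.range n, |Z i ω| :=
            Finset.abs_sum_le_sum_abs _ _
        _ ≤ ∑ i ∈ Finset.range N, |Z i ω| :=
            Finset.sum_le_sum_of_subset_of_nonneg (Finset.range_subset_range.2 hn)
              (fun i _ _ => abs_nonneg _)
    have hAeq : A = ⋂ k : ℕ, ⋃ n : ℕ, {ω | (k : ℤ) ≤ ∑ i ∈ Finset.Ico N n, Z i ω} := by
      ext ω
      simp only [hA, hU, hT, Set.mem_iInter, Set.mem_iUnion, Set.mem_setOf_eq]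
      have hc0 : (0 : ℤ) ≤ ∑ i ∈ Finset.range N, |Z i ω| :=
        Finset.sum_nonneg fun i _ => abs_nonneg _
      constructor
      · intro h k
        obtain ⟨n, hn⟩ := h (k + (2 * ∑ i ∈ Finset.range N, |Z i ω|).toNat)
        have h2c := Int.self_le_toNat (2 * ∑ i ∈ Finset.range N, |Z i ω|)
        push_cast at hn
        by_cases hnN : N ≤ n
        · refine ⟨n, ?_⟩
          rw [Finset.sum_Ico_eq_sub _ hnN]
          have h1 := habs ω N le_rfl
          rw [abs_le] at h1
          omega
        · have h1 := habs ω n (by omega)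
          rw [abs_le] at h1
          refine ⟨N, ?_⟩
          rw [Finset.Ico_self, Finset.sum_empty]
          omega
      · intro h k
        obtain ⟨n, hn⟩ := h (k + (∑ i ∈ Finset.range N, |Z i ω|).toNat)
        have h2c := Int.self_le_toNat (∑ i ∈ Finset.range N, |Z i ω|)
        push_cast at hn
        by_cases hnN : N ≤ n
        · refine ⟨n, ?_⟩
          have hsplit : ∑ i ∈ Finset.range N, Z i ω + ∑ i ∈ Finset.Ico N n, Z i ω
              = ∑ i ∈ Finset.range n, Z i ω := Finset.sum_range_add_sum_Ico (fun i => Z i ω) hnN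
          have h1 := habs ω N le_rfl
          rw [abs_le] at h1
          omega
        · rw [Finset.Ico_eq_empty (by omega), Finset.sum_empty] at hn
          refine ⟨0, ?_⟩
          rw [Finset.range_zero, Finset.sum_empty]
          omega
    rw [hAeq]
    refine MeasurableSet.iInter fun k => MeasurableSet.iUnion fun n => ?_
    have hs : Measurable[mN] fun ω => ∑ i ∈ Finset.Ico N n, Z i ω :=
      Finset.measurable_sum _ (fun i hi => hZN i (Finset.mem_Ico.1 hi).1)
    have heq2 : {ω | (k : ℤ) ≤ ∑ i ∈ Finset.Ico N n, Z i ω}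
        = (fun ω => ∑ i ∈ Finset.Ico N n, Z i ω) ⁻¹' {x | (k : ℤ) ≤ x} := rfl
    rw [heq2]
    exact hs MeasurableSpace.measurableSet_top
  -- blocks
  have hblock : ∀ m : ℕ, 1 ≤ m →
      ∀ᵐ ω ∂ℙ, ∃ k, ∀ i ∈ Finset.Ico (k * m) (k * m + m), Z i ω = (a : ℤ) := by
    intro m hm1
    set C : ℕ → Set Ω := fun k => {ω | ∀ i ∈ Finset.Ico (k * m) (k * m + m), Z i ω = (a : ℤ)}
      with hC
    have hCeq : ∀ k, C k = ⋂ i ∈ Finset.Ico (k * m) (k * m + m), Z i ⁻¹' {(a : ℤ)} := by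
      intro k
      ext ω
      simp [hC]
    have hkey : ∀ Tf : Finset ℕ, ℙ (⋂ i ∈ Tf, Z i ⁻¹' {(a : ℤ)}) = ν (a : ℤ) ^ Tf.card := by
      intro Tf
      rw [hind.meas_biInter (fun i _ => ⟨{(a : ℤ)}, MeasurableSpace.measurableSet_top, rfl⟩)]
      have h : ∀ i ∈ Tf, ℙ (Z i ⁻¹' {(a : ℤ)}) = ν (a : ℤ) := by
        intro i _
        rw [← hν i (a : ℤ)]
        congr 1
      rw [Finset.prod_congr rfl h, Finset.prod_const]
    have hCmeas : ∀ k, MeasurableSet (C k) := by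
      intro k
      rw [hCeq k]
      exact MeasurableSet.biInter (Finset.countable_toSet _)
        (fun i _ => (hmZ i) MeasurableSpace.measurableSet_top)
    have hCcard : ∀ k, ℙ (C k) = ν (a : ℤ) ^ m := by
      intro k
      rw [hCeq k, hkey, Nat.card_Ico, Nat.add_sub_cancel_left]
    have hdisj : ∀ k k', k ≠ k' →
        Disjoint (Finset.Ico (k * m) (k * m + m)) (Finset.Ico (k' * m) (k' * m + m)) := by
      intro k k' hkk'
      rw [Finset.disjoint_left]
      intro i hi hi'
      rw [Finset.mem_Ico] at hi hi'
      rcases Nat.lt_or_ge k k' with h | h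
      · have hle : k * m + m ≤ k' * m := by
          calc k * m + m = (k + 1) * m := by ring
            _ ≤ k' * m := Nat.mul_le_mul_right m (Nat.succ_le_of_lt h)
        omega
      · have hlt : k' < k := lt_of_le_of_ne h (Ne.symm hkk')
        have hle : k' * m + m ≤ k * m := by
          calc k' * m + m = (k' + 1) * m := by ring
            _ ≤ k * m := Nat.mul_le_mul_right m (Nat.succ_le_of_lt hlt)
        omega
    have hiind : iIndepSet C ℙ := by
      rw [iIndepSet_iff_meas_biInter hCmeas]
      intro S
      have hbig : (⋂ k ∈ S, C k)
          = ⋂ i ∈ S.biUnion (fun k => Finset.Ico (k * m) (k * m + m)), Z i ⁻¹' {(a : ℤ)} := by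
        ext ω
        simp only [Set.mem_iInter, hC, Set.mem_setOf_eq, Finset.mem_biUnion, Set.mem_preimage,
          Set.mem_singleton_iff]
        constructor
        · rintro h i ⟨k, hk, hik⟩
          exact h k hk i hik
        · intro h k hk i hik
          exact h i ⟨k, hk, hik⟩
      rw [hbig, hkey, Finset.card_biUnion (fun k _ k' _ h => hdisj k k' h),
        Finset.prod_congr rfl (fun k _ => hCcard k), Finset.prod_const]
      have hcard : ∑ k ∈ S, (Finset.Ico (k * m) (k * m + m)).card = S.card * m := by
        rw [Finset.sum_congr rfl (fun k _ => by rw [Nat.card_Ico, Nat.add_sub_cancel_left]),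
          Finset.sum_const, smul_eq_mul]
      rw [hcard, pow_mul]
      exact pow_right_comm _ _ _
    have htsum : (∑' k, ℙ (C k)) = ⊤ := by
      rw [tsum_congr hCcard]
      exact ENNReal.tsum_const_eq_top_of_ne_zero (pow_ne_zero m hpos)
    have hone := measure_limsup_eq_one hCmeas hiind htsum
    have hmeaslim : MeasurableSet (limsup C atTop) := by
      rw [limsup_eq_iInf_iSup_of_nat]
      simp only [Set.iInf_eq_iInter, Set.iSup_eq_iUnion]
      exact MeasurableSet.iInter fun n => MeasurableSet.iUnion fun i =>
        MeasurableSet.iUnion fun _ => hCmeas i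
    rw [ae_iff]
    have hsub : {ω | ¬ ∃ k, ∀ i ∈ Finset.Ico (k * m) (k * m + m), Z i ω = (a : ℤ)}
        ⊆ (limsup C atTop)ᶜ := by
      intro ω hω hmem
      rw [limsup_eq_iInf_iSup_of_nat] at hmem
      simp only [Set.iInf_eq_iInter, Set.iSup_eq_iUnion, Set.mem_iInter, Set.mem_iUnion] at hmem
      obtain ⟨i, _, hi⟩ := hmem 0
      exact hω ⟨i, hi⟩
    refine measure_mono_null hsub ?_
    rw [prob_compl_eq_zero_iff hmeaslim]
    exact hone
  -- conclusion
  rcases h01 with h0 | h1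
  · exfalso
    have hA'0 : ℙ A' = 0 := by rw [← hAA']; exact h0
    have hae1 : ∀ᵐ ω ∂ℙ, ω ∉ A := by
      rw [ae_iff]
      have : {ω | ¬ ω ∉ A} = A := by ext ω; simp
      rw [this]
      exact h0
    have hae2 : ∀ᵐ ω ∂ℙ, ω ∉ A' := by
      rw [ae_iff]
      have : {ω | ¬ ω ∉ A'} = A' := by ext ω; simp
      rw [this]
      exact hA'0
    have hae3 : ∀ᵐ ω ∂ℙ, ∀ m : ℕ, 1 ≤ m →
        ∃ k, ∀ i ∈ Finset.Ico (k * m) (k * m + m), Z i ω = (a : ℤ) := by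
      rw [ae_all_iff]
      intro m
      by_cases hm1 : 1 ≤ m
      · filter_upwards [hblock m hm1] with ω h _
        exact h
      · filter_upwards with ω h
        exact absurd h hm1
    have hcontra : ∀ᵐ ω : Ω ∂ℙ, False := by
      filter_upwards [hae1, hae2, hae3] with ω h1 h2 h3
      simp only [hA, Set.mem_iInter, not_forall] at h1
      obtain ⟨k₁, hk₁⟩ := h1
      simp only [hU, Set.mem_setOf_eq, not_exists, not_le] at hk₁
      simp only [hA', Set.mem_iInter, not_forall] at h2
      obtain ⟨k₂, hk₂⟩ := h2
      simp only [hD, Set.mem_setOf_eq, not_exists, not_le] at hk₂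
      have hT0 : T 0 ω = 0 := by simp [hT]
      have hk₁pos : 1 ≤ k₁ := by
        have := hk₁ 0
        rw [hT0] at this
        omega
      obtain ⟨k, hk⟩ := h3 (k₁ + k₂) (by omega)
      have hsum : ∑ i ∈ Finset.Ico (k * (k₁ + k₂)) (k * (k₁ + k₂) + (k₁ + k₂)), Z i ω
          = ((k₁ + k₂ : ℕ) : ℤ) * (a : ℤ) := by
        rw [Finset.sum_congr rfl (fun i hi => hk i hi), Finset.sum_const, Nat.card_Ico,
          Nat.add_sub_cancel_left, nsmul_eq_mul]
      have hsplit : ∑ i ∈ Finset.range (k * (k₁ + k₂)), Z i ω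
            + ∑ i ∈ Finset.Ico (k * (k₁ + k₂)) (k * (k₁ + k₂) + (k₁ + k₂)), Z i ω
          = ∑ i ∈ Finset.range (k * (k₁ + k₂) + (k₁ + k₂)), Z i ω :=
        Finset.sum_range_add_sum_Ico (fun i => Z i ω)
          (show k * (k₁ + k₂) ≤ k * (k₁ + k₂) + (k₁ + k₂) by omega)
      have hb1 := hk₁ (k * (k₁ + k₂) + (k₁ + k₂))
      have hb2 := hk₂ (k * (k₁ + k₂))
      simp only [hT] at hb1 hb2
      have hma : ((k₁ + k₂ : ℕ) : ℤ) ≤ ((k₁ + k₂ : ℕ) : ℤ) * (a : ℤ) := by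
        have h1a : (1 : ℤ) ≤ (a : ℤ) := by exact_mod_cast ha
        nlinarith [Int.ofNat_nonneg (k₁ + k₂)]
      rw [hsum] at hsplit
      omega
    rw [ae_iff] at hcontra
    simp only [not_false_iff, Set.setOf_true] at hcontra
    rw [measure_univ] at hcontra
    exact one_ne_zero hcontra
  · rw [ae_iff]
    have heq : {ω | ¬ ∀ k : ℕ, ∃ n : ℕ, (k : ℤ) ≤ ∑ i ∈ Finset.range n, Z i ω} = Aᶜ := by
      ext ω
      simp [hA, hU, hT]
    rw [heq, prob_compl_eq_zero_iff (MeasurableSet.iInter fun k => hUmeas k)]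
    exact h1


lemma iIndepFun_reindex {β : Type*} [MeasurableSpace β] (f : ℤ → Ω → β)
    (hindep : iIndepFun f ℙ)
    (g : ℕ → ℤ) (hg : Function.Injective g) :
    iIndepFun (fun i => f (g i)) ℙ := by
  classical
  rw [iIndepFun_iff_measure_inter_preimage_eq_mul]
  intro S sets hsets
  have hinv : ∀ i, Function.invFun g (g i) = i := fun i => Function.leftInverse_invFun hg i
  have key := hindep.measure_inter_preimage_eq_mul (S.image g)
    (sets := fun j => sets (Function.invFun g j)) ?_
  · have hL : (⋂ j ∈ S.image g, f j ⁻¹' sets (Function.invFun g j))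
        = ⋂ i ∈ S, f (g i) ⁻¹' sets i := by
      ext ω
      simp only [Set.mem_iInter, Finset.mem_image]
      constructor
      · intro h i hi
        have := h (g i) ⟨i, hi, rfl⟩
        rwa [hinv i] at this
      · rintro h j ⟨i, hi, rfl⟩
        rw [hinv i]
        exact h i hi
    have hR : (∏ j ∈ S.image g, ℙ (f j ⁻¹' sets (Function.invFun g j)))
        = ∏ i ∈ S, ℙ (f (g i) ⁻¹' sets i) := by
      rw [Finset.prod_image (fun i _ j _ h => hg h)]
      exact Finset.prod_congr rfl fun i _ => by rw [hinv i]
    rw [hL, hR] at key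
    exact key
  · intro j hj
    obtain ⟨i, hi, rfl⟩ := Finset.mem_image.1 hj
    show MeasurableSet (sets (Function.invFun g (g i)))
    rw [hinv i]
    exact hsets i hi

lemma swap_eq (L R : ℤ → Ω → ℕ)
    (hmeas0 : Measurable (fun ω => (L 0 ω, R 0 ω)))
    (hbin : ∀ d r : ℕ, ℙ {ω | L 0 ω + R 0 ω = d ∧ R 0 ω = r}
      = ℙ {ω | L 0 ω + R 0 ω = d} * (d.choose r : ℝ≥0∞) * (2 : ℝ≥0∞)⁻¹ ^ d) :
    ∀ v : ℤ, ℙ {ω | (L 0 ω : ℤ) - R 0 ω = v} = ℙ {ω | (R 0 ω : ℤ) - L 0 ω = v} := by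
  intro v
  classical
  have hpair : ∀ l r : ℕ, ℙ {ω | L 0 ω = l ∧ R 0 ω = r}
      = ℙ {ω | L 0 ω + R 0 ω = l + r} * ((l + r).choose r : ℝ≥0∞) * (2 : ℝ≥0∞)⁻¹ ^ (l + r) := by
    intro l r
    rw [← hbin (l + r) r]
    congr 1
    ext ω
    simp only [Set.mem_setOf_eq]
    omega
  have hexch : ∀ l r : ℕ, ℙ {ω | L 0 ω = l ∧ R 0 ω = r} = ℙ {ω | L 0 ω = r ∧ R 0 ω = l} := by
    intro l r
    rw [hpair l r, hpair r l]
    have h1 : r + l = l + r := Nat.add_comm r l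
    have h2 : (l + r).choose l = (l + r).choose r := by
      rw [← Nat.choose_symm (Nat.le_add_right l r), Nat.add_sub_cancel_left]
    rw [h1, h2]
  have hdecomp : ∀ (f g : Ω → ℕ), Measurable (fun ω => (f ω, g ω)) →
      ℙ {ω | (f ω : ℤ) - g ω = v}
        = ∑' p : ℕ × ℕ,
            ℙ (if (p.1 : ℤ) - p.2 = v then {ω | f ω = p.1 ∧ g ω = p.2} else ∅) := by
    intro f g hfg
    have hun : {ω | (f ω : ℤ) - g ω = v}
        = ⋃ p : ℕ × ℕ, (if (p.1 : ℤ) - p.2 = v then {ω | f ω = p.1 ∧ g ω = p.2} else ∅) := by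
      ext ω
      simp only [Set.mem_setOf_eq, Set.mem_iUnion]
      constructor
      · intro h
        exact ⟨(f ω, g ω), by rw [if_pos h]; exact ⟨rfl, rfl⟩⟩
      · rintro ⟨p, hp⟩
        by_cases h : (p.1 : ℤ) - p.2 = v
        · rw [if_pos h] at hp
          obtain ⟨h1, h2⟩ := hp
          rw [h1, h2]
          exact h
        · rw [if_neg h] at hp
          exact absurd hp (Set.notMem_empty ω)
    rw [hun, measure_iUnion ?_ ?_]
    · intro p q hpq
      simp only [Function.onFun]
      split_ifs
      · rw [Set.disjoint_left]
        rintro ω ⟨h1, h2⟩ ⟨h3, h4⟩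
        exact hpq (Prod.ext_iff.mpr ⟨by omega, by omega⟩)
      all_goals simp
    · intro p
      split_ifs
      · have : {ω | f ω = p.1 ∧ g ω = p.2} = (fun ω => (f ω, g ω)) ⁻¹' {p} := by
          ext ω
          simp only [Set.mem_setOf_eq, Set.mem_preimage, Set.mem_singleton_iff, Prod.ext_iff]
        rw [this]
        exact hfg (measurableSet_singleton p)
      · exact MeasurableSet.empty
  rw [hdecomp (L 0) (R 0) hmeas0, hdecomp (R 0) (L 0) (measurable_swap.comp hmeas0)]
  refine tsum_congr fun p => ?_
  by_cases h : (p.1 : ℤ) - p.2 = v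
  · rw [if_pos h, if_pos h]
    have : {ω | R 0 ω = p.1 ∧ L 0 ω = p.2} = {ω | L 0 ω = p.2 ∧ R 0 ω = p.1} := by
      ext ω
      exact and_comm
    rw [this, ← hexch p.1 p.2]
  · rw [if_neg h, if_neg h]

end SPRDAux

/-- Theorem 2.2: In the symmetric SPRD algorithm (`p = 1/2`) with degree
distribution `F`, the maximal edge length `N` at the origin is finite almost
surely.

Model: `(L_i, R_i)_{i ∈ ℤ}` are i.i.d. pairs where, conditionally on the degree
`D_i = L_i + R_i ∼ F`, the number of right-arrows is `Binomial(D_i, 1/2)`.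
In the stepwise (nested) pairing, the `(j+1)`-st right-arrow at the origin
connects to the first vertex `n ≥ 1` with
`∑_{i=1}^n L_i - ∑_{i=1}^{n-1} R_i ≥ j + 1` (value `∞` if there is no such
`n`), and symmetrically for left-arrows; `N` is the maximum of all these edge
lengths over the arrows at the origin. -/
theorem SPRD_maximal_edge_finite
    {Ω : Type*} [MeasureSpace Ω] [IsProbabilityMeasure (ℙ : Measure Ω)]
    (L R : ℤ → Ω → ℕ)
    (hmeas : ∀ i, Measurable (fun ω => (L i ω, R i ω)))
    (hindep : iIndepFun (fun i ω => (L i ω, R i ω)) ℙ)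
    (hident : ∀ i, IdentDistrib (fun ω => (L i ω, R i ω))
      (fun ω => (L 0 ω, R 0 ω)) ℙ ℙ)
    (hbin : ∀ d r : ℕ,
      ℙ {ω | L 0 ω + R 0 ω = d ∧ R 0 ω = r}
        = ℙ {ω | L 0 ω + R 0 ω = d} * (d.choose r : ℝ≥0∞) * (2 : ℝ≥0∞)⁻¹ ^ d)
    (Nr Nl : ℕ → Ω → ℕ∞)
    (hNr : ∀ j ω, Nr j ω = ⨅ (n : ℕ) (_ : 1 ≤ n ∧
        ((j : ℤ) + 1) ≤ (∑ i ∈ Finset.Icc (1 : ℤ) (n : ℤ), (L i ω : ℤ))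
          - ∑ i ∈ Finset.Icc (1 : ℤ) ((n : ℤ) - 1), (R i ω : ℤ)), (n : ℕ∞))
    (hNl : ∀ j ω, Nl j ω = ⨅ (n : ℕ) (_ : 1 ≤ n ∧
        ((j : ℤ) + 1) ≤ (∑ i ∈ Finset.Icc (1 : ℤ) (n : ℤ), (R (-i) ω : ℤ))
          - ∑ i ∈ Finset.Icc (1 : ℤ) ((n : ℤ) - 1), (L (-i) ω : ℤ)), (n : ℕ∞))
    (N : Ω → ℕ∞)
    (hN : ∀ ω, N ω = ((Finset.range (R 0 ω)).sup fun j => Nr j ω)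
        ⊔ ((Finset.range (L 0 ω)).sup fun j => Nl j ω)) :
    ∀ᵐ ω ∂ℙ, N ω < ⊤ := by
  classical
  by_cases hq : ℙ {ω | 1 ≤ L 0 ω + R 0 ω} = 0
  · have hae : ∀ᵐ ω ∂ℙ, ¬ (1 ≤ L 0 ω + R 0 ω) := by
      rw [ae_iff]
      have : {ω | ¬¬ (1 ≤ L 0 ω + R 0 ω)} = {ω | 1 ≤ L 0 ω + R 0 ω} := by
        ext ω; exact not_not
      rw [this]
      exact hq
    filter_upwards [hae] with ω hω
    rw [hN ω]
    have hL0 : L 0 ω = 0 := by omega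
    have hR0 : R 0 ω = 0 := by omega
    rw [hL0, hR0]
    simp only [Finset.range_zero, Finset.sup_empty, sup_idem]
    exact bot_lt_top
  · -- nondegenerate case
    set ν : ℤ → ℝ≥0∞ := fun v => ℙ {ω | (L 0 ω : ℤ) - R 0 ω = v} with hνdef
    have hswap := swap_eq L R (hmeas 0) hbin
    have hsym : ∀ v, ν (-v) = ν v := by
      intro v
      have h1 : {ω | (L 0 ω : ℤ) - R 0 ω = -v} = {ω | (R 0 ω : ℤ) - L 0 ω = v} := by
        ext ω
        simp only [Set.mem_setOf_eq]
        omega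
      calc ν (-v) = ℙ {ω | (R 0 ω : ℤ) - L 0 ω = v} := by rw [hνdef]; simp only; rw [h1]
        _ = ℙ {ω | (L 0 ω : ℤ) - R 0 ω = v} := (hswap v).symm
        _ = ν v := rfl
    -- find an atom d+1 of the degree distribution
    have hex : ∃ d : ℕ, ℙ {ω | L 0 ω + R 0 ω = d + 1} ≠ 0 := by
      by_contra h
      push_neg at h
      apply hq
      have hun : {ω | 1 ≤ L 0 ω + R 0 ω} = ⋃ d : ℕ, {ω | L 0 ω + R 0 ω = d + 1} := by
        ext ω
        simp only [Set.mem_setOf_eq, Set.mem_iUnion]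
        constructor
        · intro h'
          exact ⟨L 0 ω + R 0 ω - 1, by omega⟩
        · rintro ⟨d, hd⟩
          omega
      rw [hun, measure_iUnion_null_iff]
      exact h
    obtain ⟨d, hd⟩ := hex
    have hnupos : ν ((d + 1 : ℕ) : ℤ) ≠ 0 := by
      have hsubset : {ω | L 0 ω + R 0 ω = d + 1 ∧ R 0 ω = 0}
          ⊆ {ω | (L 0 ω : ℤ) - R 0 ω = ((d + 1 : ℕ) : ℤ)} := by
        rintro ω ⟨h1, h2⟩
        simp only [Set.mem_setOf_eq]
        push_cast
        omega
      have hb := hbin (d + 1) 0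
      rw [Nat.choose_zero_right, Nat.cast_one, mul_one] at hb
      have hbpos : ℙ {ω | L 0 ω + R 0 ω = d + 1 ∧ R 0 ω = 0} ≠ 0 := by
        rw [hb]
        refine mul_ne_zero hd (pow_ne_zero _ ?_)
        simp
      intro h0
      exact hbpos (measure_mono_null hsubset h0)
    -- right walk
    set ZR : ℕ → Ω → ℤ := fun i ω => (L ((i : ℤ) + 1) ω : ℤ) - (R ((i : ℤ) + 1) ω : ℤ) with hZR
    have hZRmeas : ∀ i, Measurable (ZR i) := fun i =>
      (measurable_of_countable (fun p : ℕ × ℕ => (p.1 : ℤ) - (p.2 : ℤ))).comp (hmeas _)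
    have hZRindep : iIndepFun ZR ℙ := by
      have h1 := iIndepFun_reindex (fun j ω => (L j ω, R j ω)) hindep (fun i : ℕ => (i : ℤ) + 1)
        (fun i j h => by simpa using h)
      exact h1.comp (fun _ => fun p : ℕ × ℕ => (p.1 : ℤ) - (p.2 : ℤ))
        (fun _ => measurable_of_countable _)
    have hZRν : ∀ i v, ℙ {ω | ZR i ω = v} = ν v := by
      intro i v
      have hid := (hident ((i : ℤ) + 1)).comp
        (u := fun p : ℕ × ℕ => (p.1 : ℤ) - (p.2 : ℤ)) (measurable_of_countable _)
      have := hid.measure_mem_eq (s := {v}) MeasurableSpace.measurableSet_top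
      exact this
    -- left walk
    set ZL : ℕ → Ω → ℤ := fun i ω => (R (-((i : ℤ) + 1)) ω : ℤ) - (L (-((i : ℤ) + 1)) ω : ℤ)
      with hZL
    have hZLmeas : ∀ i, Measurable (ZL i) := fun i =>
      (measurable_of_countable (fun p : ℕ × ℕ => (p.2 : ℤ) - (p.1 : ℤ))).comp (hmeas _)
    have hZLindep : iIndepFun ZL ℙ := by
      have h1 := iIndepFun_reindex (fun j ω => (L j ω, R j ω)) hindep
        (fun i : ℕ => -((i : ℤ) + 1)) (fun i j h => by simpa using h)
      exact h1.comp (fun _ => fun p : ℕ × ℕ => (p.2 : ℤ) - (p.1 : ℤ))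
        (fun _ => measurable_of_countable _)
    have hZLν : ∀ i v, ℙ {ω | ZL i ω = v} = ν v := by
      intro i v
      have hid := (hident (-((i : ℤ) + 1))).comp
        (u := fun p : ℕ × ℕ => (p.2 : ℤ) - (p.1 : ℤ)) (measurable_of_countable _)
      have h2 := hid.measure_mem_eq (s := {v}) MeasurableSpace.measurableSet_top
      calc ℙ {ω | ZL i ω = v} = ℙ {ω | (R 0 ω : ℤ) - L 0 ω = v} := h2
        _ = ν v := (hswap v).symm
    have hcoreR := core_walk ZR hZRmeas hZRindep ν hZRν hsym (d + 1) (by omega) hnupos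
    have hcoreL := core_walk ZL hZLmeas hZLindep ν hZLν hsym (d + 1) (by omega) hnupos
    -- Icc-to-range sum conversion
    have hIcc : ∀ (f : ℤ → ℤ) (n : ℕ), ∑ i ∈ Finset.Icc (1 : ℤ) (n : ℤ), f i
        = ∑ i ∈ Finset.range n, f ((i : ℤ) + 1) := by
      intro f n
      induction n with
      | zero => simp
      | succ n ih =>
        rw [Finset.sum_range_succ, ← ih]
        have hins : Finset.Icc (1 : ℤ) ((n + 1 : ℕ) : ℤ)
            = insert ((n : ℤ) + 1) (Finset.Icc (1 : ℤ) (n : ℤ)) := by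
          ext j
          simp only [Finset.mem_Icc, Finset.mem_insert]
          push_cast
          omega
        rw [hins, Finset.sum_insert (by simp)]
        ring
    filter_upwards [hcoreR, hcoreL] with ω hR hL
    rw [hN ω]
    rw [sup_lt_iff]
    constructor
    · rw [Finset.sup_lt_iff (bot_lt_top)]
      intro j _
      obtain ⟨n, hn⟩ := hR (j + 1)
      have hn' : ((j : ℤ) + 1) ≤ ∑ i ∈ Finset.range n, (L ((i : ℤ) + 1) ω : ℤ)
          - ∑ i ∈ Finset.range n, (R ((i : ℤ) + 1) ω : ℤ) := by
        rw [← Finset.sum_sub_distrib]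
        push_cast at hn
        exact hn
      have hcond : 1 ≤ n + 1 ∧ ((j : ℤ) + 1)
          ≤ (∑ i ∈ Finset.Icc (1 : ℤ) ((n + 1 : ℕ) : ℤ), (L i ω : ℤ))
            - ∑ i ∈ Finset.Icc (1 : ℤ) (((n + 1 : ℕ) : ℤ) - 1), (R i ω : ℤ) := by
        refine ⟨by omega, ?_⟩
        have e1 := hIcc (fun i => (L i ω : ℤ)) (n + 1)
        have hcast : ((n + 1 : ℕ) : ℤ) - 1 = ((n : ℕ) : ℤ) := by push_cast; ring
        have e2 : ∑ i ∈ Finset.Icc (1 : ℤ) (((n + 1 : ℕ) : ℤ) - 1), (R i ω : ℤ)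
            = ∑ i ∈ Finset.range n, (R ((i : ℤ) + 1) ω : ℤ) := by
          rw [hcast]
          exact hIcc (fun i => (R i ω : ℤ)) n
        rw [e1, e2, Finset.sum_range_succ]
        have hLnn : (0 : ℤ) ≤ (L ((n : ℤ) + 1) ω : ℤ) := Int.natCast_nonneg _
        omega
      have hle : Nr j ω ≤ ((n + 1 : ℕ) : ℕ∞) := by
        rw [hNr j ω]
        exact iInf₂_le (n + 1) hcond
      exact lt_of_le_of_lt hle (WithTop.coe_lt_top _)
    · rw [Finset.sup_lt_iff (bot_lt_top)]
      intro j _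
      obtain ⟨n, hn⟩ := hL (j + 1)
      have hn' : ((j : ℤ) + 1) ≤ ∑ i ∈ Finset.range n, (R (-((i : ℤ) + 1)) ω : ℤ)
          - ∑ i ∈ Finset.range n, (L (-((i : ℤ) + 1)) ω : ℤ) := by
        rw [← Finset.sum_sub_distrib]
        push_cast at hn
        exact hn
      have hcond : 1 ≤ n + 1 ∧ ((j : ℤ) + 1)
          ≤ (∑ i ∈ Finset.Icc (1 : ℤ) ((n + 1 : ℕ) : ℤ), (R (-i) ω : ℤ))
            - ∑ i ∈ Finset.Icc (1 : ℤ) (((n + 1 : ℕ) : ℤ) - 1), (L (-i) ω : ℤ) := by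
        refine ⟨by omega, ?_⟩
        have e1 := hIcc (fun i => (R (-i) ω : ℤ)) (n + 1)
        have hcast : ((n + 1 : ℕ) : ℤ) - 1 = ((n : ℕ) : ℤ) := by push_cast; ring
        have e2 : ∑ i ∈ Finset.Icc (1 : ℤ) (((n + 1 : ℕ) : ℤ) - 1), (L (-i) ω : ℤ)
            = ∑ i ∈ Finset.range n, (L (-((i : ℤ) + 1)) ω : ℤ) := by
          rw [hcast]
          exact hIcc (fun i => (L (-i) ω : ℤ)) n
        rw [e1, e2, Finset.sum_range_succ]
        have hRnn : (0 : ℤ) ≤ (R (-((n : ℤ) + 1)) ω : ℤ) := Int.natCast_nonneg _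
        omega
      have hle : Nl j ω ≤ ((n + 1 : ℕ) : ℕ∞) := by
        rw [hNl j ω]
        exact iInf₂_le (n + 1) hcond
      exact lt_of_le_of_lt hle (WithTop.coe_lt_top _)
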